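/- For d ≥ 2 and 1 ≤ λ ≤ d−1, the number of type-II stopping sets of size d² + d + λ in an n_1 × n_2 array (components with d_1 = d_2 = d) equals (d+1−λ)!·C(d+1,λ)²·C(n_1,d+1)·C(n_2,d+1), and all such stopping sets are non-obvious with a (d+1)×(d+1) rectangular support. -/

import Mathlib

/-- A type-II stopping set of a product code with MDS column distance `d₁` and
row distance `d₂`: a nonempty set of positions in the `n₁ × n₂` array such that
every nonempty row contains at least `d₂` elements and every nonempty column
contains at least `d₁` elements. -/
def IsStoppingSet {n₁ n₂ : ℕ} (d₁ d₂ : ℕ) (S : Finset (Fin n₁ × Fin n₂)) : Prop :=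
  S.Nonempty ∧
  (∀ i : Fin n₁, (∃ p ∈ S, p.1 = i) → d₂ ≤ (S.filter fun p => p.1 = i).card) ∧
  (∀ j : Fin n₂, (∃ p ∈ S, p.2 = j) → d₁ ≤ (S.filter fun p => p.2 = j).card)


open Finset

section Aux

variable {X Y : Type*} [DecidableEq X] [DecidableEq Y] [Fintype X] [Fintype Y]

private lemma exists_unique_pair (Z : Finset (X × Y)) (A : Finset X)
    (hA : Z.image Prod.fst = A) (hf : Set.InjOn Prod.fst (Z : Set (X × Y))) {x : X}
    (hx : x ∈ A) : ∃! p, p ∈ Z ∧ p.1 = x := by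
  rw [← hA] at hx
  obtain ⟨p, hp, hpx⟩ := Finset.mem_image.1 hx
  exact ⟨p, ⟨hp, hpx⟩, fun q hq => hf hq.1 hp (by rw [hq.2, hpx])⟩

open Classical in
private lemma graph_card (A : Finset X) (C : Finset Y) :
    (Finset.univ.filter (fun Z : Finset (X × Y) =>
        Z ⊆ A ×ˢ C ∧ Z.image Prod.fst = A ∧ Set.InjOn Prod.fst (Z : Set (X × Y)) ∧
        Set.InjOn Prod.snd (Z : Set (X × Y)))).card
      = C.card.descFactorial A.card := by
  rw [← Fintype.card_coe C, ← Fintype.card_coe A, ← Fintype.card_embedding_eq,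
    ← Finset.card_univ]
  refine (Finset.card_bij
    (fun (g : ↥A ↪ ↥C) _ => Finset.univ.image (fun a : ↥A => ((a : X), (g a : Y))))
    ?_ ?_ ?_).symm
  · -- maps into the filter set
    intro g _
    simp only [Finset.mem_filter, Finset.mem_univ, true_and]
    refine ⟨?_, ?_, ?_, ?_⟩
    · intro p hp
      obtain ⟨a, _, rfl⟩ := Finset.mem_image.1 hp
      exact Finset.mem_product.2 ⟨a.2, (g a).2⟩
    · ext x
      simp only [Finset.image_image, Finset.mem_image, Function.comp]
      constructor
      · rintro ⟨a, _, rfl⟩; exact a.2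
      · intro hx; exact ⟨⟨x, hx⟩, Finset.mem_univ _, rfl⟩
    · intro p hp q hq hpq
      simp only [Finset.coe_image, Set.mem_image] at hp hq
      obtain ⟨a, _, rfl⟩ := hp
      obtain ⟨a', _, rfl⟩ := hq
      have : a = a' := Subtype.ext hpq
      rw [this]
    · intro p hp q hq hpq
      simp only [Finset.coe_image, Set.mem_image] at hp hq
      obtain ⟨a, _, rfl⟩ := hp
      obtain ⟨a', _, rfl⟩ := hq
      have : a = a' := g.injective (Subtype.ext hpq)
      rw [this]
  · -- injective
    intro g _ g' _ h
    ext a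
    have : ((a : X), (g a : Y)) ∈ Finset.univ.image (fun a : ↥A => ((a : X), (g' a : Y))) := by
      rw [← h]; exact Finset.mem_image_of_mem _ (Finset.mem_univ a)
    obtain ⟨a', _, ha'⟩ := Finset.mem_image.1 this
    have h1 : a' = a := Subtype.ext (congrArg Prod.fst ha')
    subst h1
    exact congrArg Subtype.val ((Subtype.ext (congrArg Prod.snd ha') : g' a' = g a').symm)
  · -- surjective
    intro Z hZ
    simp only [Finset.mem_filter, Finset.mem_univ, true_and] at hZ
    obtain ⟨hZC, hA, hf, hs⟩ := hZ
    have hch : ∀ a : ↥A, ∃! p, p ∈ Z ∧ p.1 = (a : X) :=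
      fun a => exists_unique_pair Z A hA hf a.2
    refine ⟨⟨fun a => ⟨(Z.choose _ (hch a)).2,
        (Finset.mem_product.1 (hZC (Z.choose_mem _ (hch a)))).2⟩, ?_⟩, Finset.mem_univ _, ?_⟩
    · intro a a' h
      have h1 := Z.choose_mem _ (hch a)
      have h2 := Z.choose_mem _ (hch a')
      have h3 := Z.choose_property _ (hch a)
      have h4 := Z.choose_property _ (hch a')
      have heq := hs h1 h2 (by simpa using congrArg Subtype.val h)
      exact Subtype.ext (by rw [← h3, ← h4, heq])
    · ext p
      simp only [Finset.mem_image, Finset.mem_univ, true_and, Function.Embedding.coeFn_mk]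
      constructor
      · rintro ⟨a, rfl⟩
        have h1 := Z.choose_mem _ (hch a)
        have h3 := Z.choose_property _ (hch a)
        have : ((a : X), (Z.choose _ (hch a)).2) = Z.choose _ (hch a) :=
          Prod.ext h3.symm rfl
        change ((a : X), (Z.choose _ (hch a)).2) ∈ Z
        rw [this]; exact h1
      · intro hp
        have hx : p.1 ∈ A := by rw [← hA]; exact Finset.mem_image_of_mem _ hp
        refine ⟨⟨p.1, hx⟩, ?_⟩
        have h1 := Z.choose_mem _ (hch ⟨p.1, hx⟩)
        have h3 := Z.choose_property _ (hch ⟨p.1, hx⟩)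
        have : Z.choose _ (hch ⟨p.1, hx⟩) = p := hf h1 hp h3
        conv_rhs => rw [← this]
        exact Prod.ext h3.symm rfl

open Classical in
private lemma ppm_card (R : Finset X) (C : Finset Y) (m β : ℕ)
    (hR : R.card = m) (hC : C.card = m) :
    (Finset.univ.filter (fun Z : Finset (X × Y) =>
        Z ⊆ R ×ˢ C ∧ Z.card = β ∧ Set.InjOn Prod.fst (Z : Set (X × Y)) ∧
        Set.InjOn Prod.snd (Z : Set (X × Y)))).card
      = m.choose β * m.descFactorial β := by
  have hmap : ∀ Z ∈ (Finset.univ.filter (fun Z : Finset (X × Y) =>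
        Z ⊆ R ×ˢ C ∧ Z.card = β ∧ Set.InjOn Prod.fst (Z : Set (X × Y)) ∧
        Set.InjOn Prod.snd (Z : Set (X × Y)))), Z.image Prod.fst ∈ R.powersetCard β := by
    intro Z hZ
    simp only [Finset.mem_filter, Finset.mem_univ, true_and] at hZ
    obtain ⟨hZRC, hZc, hf, _⟩ := hZ
    refine Finset.mem_powersetCard.2 ⟨?_, ?_⟩
    · intro x hx
      obtain ⟨p, hp, rfl⟩ := Finset.mem_image.1 hx
      exact (Finset.mem_product.1 (hZRC hp)).1
    · rw [Finset.card_image_of_injOn hf, hZc]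
  rw [Finset.card_eq_sum_card_fiberwise hmap]
  have hfib : ∀ A ∈ R.powersetCard β, ((Finset.univ.filter (fun Z : Finset (X × Y) =>
        Z ⊆ R ×ˢ C ∧ Z.card = β ∧ Set.InjOn Prod.fst (Z : Set (X × Y)) ∧
        Set.InjOn Prod.snd (Z : Set (X × Y)))).filter
          (fun Z => Z.image Prod.fst = A)).card = m.descFactorial β := by
    intro A hA
    obtain ⟨hAR, hAc⟩ := Finset.mem_powersetCard.1 hA
    rw [Finset.filter_filter]
    have hsetseq : (Finset.univ.filter (fun Z : Finset (X × Y) =>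
        (Z ⊆ R ×ˢ C ∧ Z.card = β ∧ Set.InjOn Prod.fst (Z : Set (X × Y)) ∧
          Set.InjOn Prod.snd (Z : Set (X × Y))) ∧ Z.image Prod.fst = A))
        = (Finset.univ.filter (fun Z : Finset (X × Y) =>
        Z ⊆ A ×ˢ C ∧ Z.image Prod.fst = A ∧ Set.InjOn Prod.fst (Z : Set (X × Y)) ∧
        Set.InjOn Prod.snd (Z : Set (X × Y)))) := by
      ext Z
      simp only [Finset.mem_filter, Finset.mem_univ, true_and]
      constructor
      · rintro ⟨⟨hZRC, hZc, hf, hs⟩, hIm⟩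
        refine ⟨?_, hIm, hf, hs⟩
        intro p hp
        refine Finset.mem_product.2 ⟨?_, (Finset.mem_product.1 (hZRC hp)).2⟩
        rw [← hIm]; exact Finset.mem_image_of_mem _ hp
      · rintro ⟨hZAC, hIm, hf, hs⟩
        refine ⟨⟨?_, ?_, hf, hs⟩, hIm⟩
        · intro p hp
          exact Finset.mem_product.2 ⟨hAR (Finset.mem_product.1 (hZAC hp)).1,
            (Finset.mem_product.1 (hZAC hp)).2⟩
        · rw [← hAc, ← hIm, Finset.card_image_of_injOn hf]
    rw [hsetseq, graph_card A C, hAc, hC]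
  rw [Finset.sum_congr rfl hfib, Finset.sum_const, Finset.card_powersetCard, hR, smul_eq_mul]

end Aux

private lemma stopping_structure {n₁ n₂ d l : ℕ} (hd : 2 ≤ d) (hl1 : 1 ≤ l) (hl2 : l ≤ d - 1)
    (S : Finset (Fin n₁ × Fin n₂)) (hS : IsStoppingSet d d S)
    (hcard : S.card = d ^ 2 + d + l) :
    (S.image Prod.fst).card = d + 1 ∧ (S.image Prod.snd).card = d + 1 ∧
    S ⊆ (S.image Prod.fst) ×ˢ (S.image Prod.snd) ∧
    ((((S.image Prod.fst) ×ˢ (S.image Prod.snd)) \ S).card = d + 1 - l ∧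
    Set.InjOn Prod.fst ((((S.image Prod.fst) ×ˢ (S.image Prod.snd)) \ S : Finset _) :
      Set (Fin n₁ × Fin n₂)) ∧
    Set.InjOn Prod.snd ((((S.image Prod.fst) ×ˢ (S.image Prod.snd)) \ S : Finset _) :
      Set (Fin n₁ × Fin n₂))) := by
  classical
  obtain ⟨hne, hrow, hcol⟩ := hS
  have hl2' : l + 1 ≤ d := by omega
  set R := S.image Prod.fst with hRdef
  set C := S.image Prod.snd with hCdef
  have hsub : S ⊆ R ×ˢ C := by
    intro p hp
    exact Finset.mem_product.2 ⟨Finset.mem_image_of_mem _ hp, Finset.mem_image_of_mem _ hp⟩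
  -- lower bounds
  have hfibR : ∀ x ∈ S, Prod.fst x ∈ R := fun x hx => Finset.mem_image_of_mem _ hx
  have hfibC : ∀ x ∈ S, Prod.snd x ∈ C := fun x hx => Finset.mem_image_of_mem _ hx
  have hsumR := Finset.card_eq_sum_card_fiberwise hfibR
  have hsumC := Finset.card_eq_sum_card_fiberwise hfibC
  have hRd : R.card * d ≤ S.card := by
    rw [hsumR]
    refine Finset.card_nsmul_le_sum R _ d ?_
    intro i hi
    obtain ⟨p, hp, hpi⟩ := Finset.mem_image.1 hi
    exact hrow i ⟨p, hp, hpi⟩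
  have hCd : C.card * d ≤ S.card := by
    rw [hsumC]
    refine Finset.card_nsmul_le_sum C _ d ?_
    intro j hj
    obtain ⟨p, hp, hpj⟩ := Finset.mem_image.1 hj
    exact hcol j ⟨p, hp, hpj⟩
  have hRC : S.card ≤ R.card * C.card := by
    calc S.card ≤ (R ×ˢ C).card := Finset.card_le_card hsub
    _ = R.card * C.card := Finset.card_product R C
  -- upper bounds on R.card, C.card
  have hRle : R.card ≤ d + 1 := by
    by_contra h
    push_neg at h
    have h1 : (d + 2) * d ≤ R.card * d := Nat.mul_le_mul_right d h
    have h2 : (d + 2) * d = d ^ 2 + 2 * d := by ring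
    have h3 : R.card * d ≤ d ^ 2 + d + l := hcard ▸ hRd
    have := h2 ▸ (h1.trans h3)
    linarith
  have hCle : C.card ≤ d + 1 := by
    by_contra h
    push_neg at h
    have h1 : (d + 2) * d ≤ C.card * d := Nat.mul_le_mul_right d h
    have h2 : (d + 2) * d = d ^ 2 + 2 * d := by ring
    have h3 : C.card * d ≤ d ^ 2 + d + l := hcard ▸ hCd
    have := h2 ▸ (h1.trans h3)
    linarith
  have hRge : d + 1 ≤ R.card := by
    by_contra h
    push_neg at h
    have h0 : R.card ≤ d := by omega
    have h1 : R.card * C.card ≤ d * (d + 1) := Nat.mul_le_mul h0 hCle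
    have h2 : d * (d + 1) = d ^ 2 + d := by ring
    have h3 : d ^ 2 + d + l ≤ d * (d + 1) := (hcard ▸ hRC).trans h1
    rw [h2] at h3
    linarith
  have hCge : d + 1 ≤ C.card := by
    by_contra h
    push_neg at h
    have h0 : C.card ≤ d := by omega
    have h1 : R.card * C.card ≤ (d + 1) * d := Nat.mul_le_mul hRle h0
    have h2 : (d + 1) * d = d ^ 2 + d := by ring
    have h3 : d ^ 2 + d + l ≤ (d + 1) * d := (hcard ▸ hRC).trans h1
    rw [h2] at h3
    linarith
  have hR : R.card = d + 1 := le_antisymm hRle hRge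
  have hC : C.card = d + 1 := le_antisymm hCle hCge
  refine ⟨hR, hC, hsub, ?_, ?_, ?_⟩
  · rw [Finset.card_sdiff_of_subset hsub, Finset.card_product, hR, hC, hcard]
    have hmul : (d + 1) * (d + 1) = d ^ 2 + 2 * d + 1 := by ring
    have key : ∀ D : ℕ, l + 1 ≤ d → D + 2 * d + 1 - (D + d + l) = d + 1 - l := by
      intro D h; omega
    rw [hmul]; exact key _ hl2'
  · -- InjOn fst on Z
    intro p hp q hq hpq
    by_contra hne'
    have hpZ : p ∈ (R ×ˢ C) \ S := by exact_mod_cast hp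
    have hqZ : q ∈ (R ×ˢ C) \ S := by exact_mod_cast hq
    set i := p.1 with hidef
    have hiR : i ∈ R := (Finset.mem_product.1 (Finset.mem_sdiff.1 hpZ).1).1
    obtain ⟨s₀, hs₀, hs₀i⟩ := Finset.mem_image.1 hiR
    have hrowS : d ≤ (S.filter fun x => x.1 = i).card := hrow i ⟨s₀, hs₀, hs₀i⟩
    have hZ2 : 2 ≤ (((R ×ˢ C) \ S).filter fun x => x.1 = i).card := by
      have hsub2 : ({p, q} : Finset (Fin n₁ × Fin n₂)) ⊆
          ((R ×ˢ C) \ S).filter fun x => x.1 = i := by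
        intro x hx
        rcases Finset.mem_insert.1 hx with rfl | hx
        · exact Finset.mem_filter.2 ⟨hpZ, rfl⟩
        · rw [Finset.mem_singleton.1 hx]
          exact Finset.mem_filter.2 ⟨hqZ, hpq.symm⟩
      calc 2 = ({p, q} : Finset (Fin n₁ × Fin n₂)).card := (Finset.card_pair hne').symm
      _ ≤ _ := Finset.card_le_card hsub2
    have hdisj : Disjoint (S.filter fun x => x.1 = i) (((R ×ˢ C) \ S).filter fun x => x.1 = i) :=
      Finset.disjoint_filter_filter (Finset.disjoint_sdiff)
    have hun : (S.filter fun x => x.1 = i) ∪ (((R ×ˢ C) \ S).filter fun x => x.1 = i)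
        ⊆ (R ×ˢ C).filter fun x => x.1 = i := by
      intro x hx
      rcases Finset.mem_union.1 hx with hx | hx
      · exact Finset.mem_filter.2 ⟨hsub (Finset.mem_filter.1 hx).1, (Finset.mem_filter.1 hx).2⟩
      · exact Finset.mem_filter.2 ⟨(Finset.mem_sdiff.1 (Finset.mem_filter.1 hx).1).1,
          (Finset.mem_filter.1 hx).2⟩
    have hbound : ((R ×ˢ C).filter fun x => x.1 = i).card ≤ C.card := by
      refine Finset.card_le_card_of_injOn Prod.snd ?_ ?_
      · intro x hx
        exact (Finset.mem_product.1 (Finset.mem_filter.1 hx).1).2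
      · intro x hx y hy hxy
        simp only [Finset.coe_filter, Set.mem_setOf_eq] at hx hy
        exact Prod.ext (hx.2.trans hy.2.symm) hxy
    have := (Finset.card_union_of_disjoint hdisj) ▸ (Finset.card_le_card hun)
    rw [hC] at hbound
    omega
  · -- InjOn snd on Z
    intro p hp q hq hpq
    by_contra hne'
    have hpZ : p ∈ (R ×ˢ C) \ S := by exact_mod_cast hp
    have hqZ : q ∈ (R ×ˢ C) \ S := by exact_mod_cast hq
    set j := p.2 with hjdef
    have hjC : j ∈ C := (Finset.mem_product.1 (Finset.mem_sdiff.1 hpZ).1).2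
    obtain ⟨s₀, hs₀, hs₀j⟩ := Finset.mem_image.1 hjC
    have hcolS : d ≤ (S.filter fun x => x.2 = j).card := hcol j ⟨s₀, hs₀, hs₀j⟩
    have hZ2 : 2 ≤ (((R ×ˢ C) \ S).filter fun x => x.2 = j).card := by
      have hsub2 : ({p, q} : Finset (Fin n₁ × Fin n₂)) ⊆
          ((R ×ˢ C) \ S).filter fun x => x.2 = j := by
        intro x hx
        rcases Finset.mem_insert.1 hx with rfl | hx
        · exact Finset.mem_filter.2 ⟨hpZ, rfl⟩
        · rw [Finset.mem_singleton.1 hx]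
          exact Finset.mem_filter.2 ⟨hqZ, hpq.symm⟩
      calc 2 = ({p, q} : Finset (Fin n₁ × Fin n₂)).card := (Finset.card_pair hne').symm
      _ ≤ _ := Finset.card_le_card hsub2
    have hdisj : Disjoint (S.filter fun x => x.2 = j) (((R ×ˢ C) \ S).filter fun x => x.2 = j) :=
      Finset.disjoint_filter_filter (Finset.disjoint_sdiff)
    have hun : (S.filter fun x => x.2 = j) ∪ (((R ×ˢ C) \ S).filter fun x => x.2 = j)
        ⊆ (R ×ˢ C).filter fun x => x.2 = j := by
      intro x hx
      rcases Finset.mem_union.1 hx with hx | hx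
      · exact Finset.mem_filter.2 ⟨hsub (Finset.mem_filter.1 hx).1, (Finset.mem_filter.1 hx).2⟩
      · exact Finset.mem_filter.2 ⟨(Finset.mem_sdiff.1 (Finset.mem_filter.1 hx).1).1,
          (Finset.mem_filter.1 hx).2⟩
    have hbound : ((R ×ˢ C).filter fun x => x.2 = j).card ≤ R.card := by
      refine Finset.card_le_card_of_injOn Prod.fst ?_ ?_
      · intro x hx
        exact (Finset.mem_product.1 (Finset.mem_filter.1 hx).1).1
      · intro x hx y hy hxy
        simp only [Finset.coe_filter, Set.mem_setOf_eq] at hx hy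
        exact Prod.ext hxy (hx.2.trans hy.2.symm)
    have := (Finset.card_union_of_disjoint hdisj) ▸ (Finset.card_le_card hun)
    rw [hR] at hbound
    omega

private lemma row_filter_card {n₁ n₂ : ℕ} (R : Finset (Fin n₁)) (C : Finset (Fin n₂))
    {i : Fin n₁} (hi : i ∈ R) :
    ((R ×ˢ C).filter fun p => p.1 = i).card = C.card := by
  have : ((R ×ˢ C).filter fun p => p.1 = i) = {i} ×ˢ C := by
    ext p
    simp only [Finset.mem_filter, Finset.mem_product, Finset.mem_singleton]
    constructor
    · rintro ⟨⟨_, h2⟩, h3⟩; exact ⟨h3, h2⟩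
    · rintro ⟨h1, h2⟩; exact ⟨⟨h1 ▸ hi, h2⟩, h1⟩
  rw [this, Finset.card_product, Finset.card_singleton, one_mul]

private lemma col_filter_card {n₁ n₂ : ℕ} (R : Finset (Fin n₁)) (C : Finset (Fin n₂))
    {j : Fin n₂} (hj : j ∈ C) :
    ((R ×ˢ C).filter fun p => p.2 = j).card = R.card := by
  have : ((R ×ˢ C).filter fun p => p.2 = j) = R ×ˢ {j} := by
    ext p
    simp only [Finset.mem_filter, Finset.mem_product, Finset.mem_singleton]
    constructor
    · rintro ⟨⟨h1, _⟩, h3⟩; exact ⟨h1, h3⟩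
    · rintro ⟨h1, h2⟩; exact ⟨⟨h1, h2 ▸ hj⟩, h2⟩
  rw [this, Finset.card_product, Finset.card_singleton, mul_one]

private lemma reverse_construct {n₁ n₂ d l : ℕ} (hd : 2 ≤ d) (hl1 : 1 ≤ l) (hl2 : l ≤ d - 1)
    (R : Finset (Fin n₁)) (C : Finset (Fin n₂)) (hR : R.card = d + 1) (hC : C.card = d + 1)
    (Z : Finset (Fin n₁ × Fin n₂)) (hZRC : Z ⊆ R ×ˢ C) (hZc : Z.card = d + 1 - l)
    (hZf : Set.InjOn Prod.fst (Z : Set (Fin n₁ × Fin n₂)))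
    (hZs : Set.InjOn Prod.snd (Z : Set (Fin n₁ × Fin n₂))) :
    IsStoppingSet d d ((R ×ˢ C) \ Z) ∧ ((R ×ˢ C) \ Z).card = d ^ 2 + d + l ∧
    ((R ×ˢ C) \ Z).image Prod.fst = R ∧ ((R ×ˢ C) \ Z).image Prod.snd = C := by
  classical
  have hl2' : l + 1 ≤ d := by omega
  set S := (R ×ˢ C) \ Z with hSdef
  have hScard : S.card = d ^ 2 + d + l := by
    rw [hSdef, Finset.card_sdiff_of_subset hZRC, Finset.card_product, hR, hC, hZc]
    have hmul : (d + 1) * (d + 1) = d ^ 2 + 2 * d + 1 := by ring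
    have key : ∀ D : ℕ, l + 1 ≤ d → D + 2 * d + 1 - (d + 1 - l) = D + d + l := by
      intro D h; omega
    rw [hmul]; exact key _ hl2'
  have hrowb : ∀ i ∈ R, d ≤ (S.filter fun p => p.1 = i).card := by
    intro i hi
    have hfe : (S.filter fun p => p.1 = i)
        = ((R ×ˢ C).filter fun p => p.1 = i) \ (Z.filter fun p => p.1 = i) := by
      ext p
      simp only [hSdef, Finset.mem_filter, Finset.mem_sdiff]
      tauto
    have hZ1 : (Z.filter fun p => p.1 = i).card ≤ 1 := by
      refine Finset.card_le_one.2 ?_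
      intro p hp q hq
      have hp' := Finset.mem_filter.1 hp
      have hq' := Finset.mem_filter.1 hq
      exact hZf hp'.1 hq'.1 (hp'.2.trans hq'.2.symm)
    have hZsub : (Z.filter fun p => p.1 = i) ⊆ (R ×ˢ C).filter fun p => p.1 = i :=
      Finset.filter_subset_filter _ hZRC
    rw [hfe, Finset.card_sdiff_of_subset hZsub, row_filter_card R C hi, hC]
    omega
  have hcolb : ∀ j ∈ C, d ≤ (S.filter fun p => p.2 = j).card := by
    intro j hj
    have hfe : (S.filter fun p => p.2 = j)
        = ((R ×ˢ C).filter fun p => p.2 = j) \ (Z.filter fun p => p.2 = j) := by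
      ext p
      simp only [hSdef, Finset.mem_filter, Finset.mem_sdiff]
      tauto
    have hZ1 : (Z.filter fun p => p.2 = j).card ≤ 1 := by
      refine Finset.card_le_one.2 ?_
      intro p hp q hq
      have hp' := Finset.mem_filter.1 hp
      have hq' := Finset.mem_filter.1 hq
      exact hZs hp'.1 hq'.1 (hp'.2.trans hq'.2.symm)
    have hZsub : (Z.filter fun p => p.2 = j) ⊆ (R ×ˢ C).filter fun p => p.2 = j :=
      Finset.filter_subset_filter _ hZRC
    rw [hfe, Finset.card_sdiff_of_subset hZsub, col_filter_card R C hj, hR]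
    omega
  have hSsub : S ⊆ R ×ˢ C := Finset.sdiff_subset
  have hrownon : ∀ i ∈ R, ∃ p ∈ S, p.1 = i := by
    intro i hi
    have := hrowb i hi
    have hpos : 0 < (S.filter fun p => p.1 = i).card := by omega
    obtain ⟨p, hp⟩ := Finset.card_pos.1 hpos
    have hp' := Finset.mem_filter.1 hp
    exact ⟨p, hp'.1, hp'.2⟩
  have hcolnon : ∀ j ∈ C, ∃ p ∈ S, p.2 = j := by
    intro j hj
    have := hcolb j hj
    have hpos : 0 < (S.filter fun p => p.2 = j).card := by omega
    obtain ⟨p, hp⟩ := Finset.card_pos.1 hpos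
    have hp' := Finset.mem_filter.1 hp
    exact ⟨p, hp'.1, hp'.2⟩
  refine ⟨⟨?_, ?_, ?_⟩, hScard, ?_, ?_⟩
  · rw [← Finset.card_pos, hScard]; positivity
  · intro i hi
    obtain ⟨p, hp, hpi⟩ := hi
    exact hrowb i (hpi ▸ (Finset.mem_product.1 (hSsub hp)).1)
  · intro j hj
    obtain ⟨p, hp, hpj⟩ := hj
    exact hcolb j (hpj ▸ (Finset.mem_product.1 (hSsub hp)).2)
  · ext i
    simp only [Finset.mem_image]
    constructor
    · rintro ⟨p, hp, rfl⟩
      exact (Finset.mem_product.1 (hSsub hp)).1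
    · intro hi
      obtain ⟨p, hp, hpi⟩ := hrownon i hi
      exact ⟨p, hp, hpi⟩
  · ext j
    simp only [Finset.mem_image]
    constructor
    · rintro ⟨p, hp, rfl⟩
      exact (Finset.mem_product.1 (hSsub hp)).2
    · intro hj
      obtain ⟨p, hp, hpj⟩ := hcolnon j hj
      exact ⟨p, hp, hpj⟩

open Nat in
/-- for `d ≥ 2` and `1 ≤ l ≤ d-1`, the number of type-II stopping
sets of size `d² + d + l` equals `(d+1-l)!·C(d+1,l)²·C(n₁,d+1)·C(n₂,d+1)`, and
all such stopping sets are non-obvious with a `(d+1)×(d+1)` rectangular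
support. -/
theorem count_stoppingSets_d_sq_add_d_add_l
    (n₁ n₂ d l : ℕ) (hd : 2 ≤ d) (hl1 : 1 ≤ l) (hl2 : l ≤ d - 1) :
    Set.ncard {S : Finset (Fin n₁ × Fin n₂) |
        IsStoppingSet d d S ∧ S.card = d ^ 2 + d + l}
      = (d + 1 - l)! * (d + 1).choose l ^ 2 * (n₁.choose (d + 1) * n₂.choose (d + 1)) ∧
    ∀ S : Finset (Fin n₁ × Fin n₂), IsStoppingSet d d S → S.card = d ^ 2 + d + l →
      (S.image Prod.fst).card = d + 1 ∧ (S.image Prod.snd).card = d + 1 ∧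
        S ≠ (S.image Prod.fst) ×ˢ (S.image Prod.snd) := by
  classical
  have hl2' : l + 1 ≤ d := by omega
  constructor
  · have hset : {S : Finset (Fin n₁ × Fin n₂) | IsStoppingSet d d S ∧ S.card = d ^ 2 + d + l}
        = ↑(Finset.univ.filter (fun S : Finset (Fin n₁ × Fin n₂) =>
            IsStoppingSet d d S ∧ S.card = d ^ 2 + d + l)) := by
      ext S
      simp only [Set.mem_setOf_eq, Finset.coe_filter, Finset.mem_univ, true_and]
    rw [hset, Set.ncard_coe_finset]
    have hmap : ∀ S ∈ (Finset.univ.filter (fun S : Finset (Fin n₁ × Fin n₂) =>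
          IsStoppingSet d d S ∧ S.card = d ^ 2 + d + l)),
        (S.image Prod.fst, S.image Prod.snd) ∈
          ((Finset.univ : Finset (Fin n₁)).powersetCard (d + 1)) ×ˢ
            ((Finset.univ : Finset (Fin n₂)).powersetCard (d + 1)) := by
      intro S hS
      simp only [Finset.mem_filter, Finset.mem_univ, true_and] at hS
      obtain ⟨h1, h2, _⟩ := stopping_structure hd hl1 hl2 S hS.1 hS.2
      exact Finset.mem_product.2 ⟨Finset.mem_powersetCard.2 ⟨Finset.subset_univ _, h1⟩,
        Finset.mem_powersetCard.2 ⟨Finset.subset_univ _, h2⟩⟩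
    rw [Finset.card_eq_sum_card_fiberwise hmap]
    have hfib : ∀ rc ∈ ((Finset.univ : Finset (Fin n₁)).powersetCard (d + 1)) ×ˢ
            ((Finset.univ : Finset (Fin n₂)).powersetCard (d + 1)),
        ((Finset.univ.filter (fun S : Finset (Fin n₁ × Fin n₂) =>
            IsStoppingSet d d S ∧ S.card = d ^ 2 + d + l)).filter
          (fun S => (S.image Prod.fst, S.image Prod.snd) = rc)).card
        = (d + 1).choose (d + 1 - l) * (d + 1).descFactorial (d + 1 - l) := by
      rintro ⟨R, C⟩ hrc
      obtain ⟨hRm, hCm⟩ := Finset.mem_product.1 hrc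
      have hR := (Finset.mem_powersetCard.1 hRm).2
      have hC := (Finset.mem_powersetCard.1 hCm).2
      rw [← ppm_card R C (d + 1) (d + 1 - l) hR hC]
      refine Finset.card_bij' (fun S _ => (R ×ˢ C) \ S) (fun Z _ => (R ×ˢ C) \ Z)
        ?_ ?_ ?_ ?_
      · intro S hS
        simp only [Finset.mem_filter, Finset.mem_univ, true_and, Prod.mk.injEq] at hS ⊢
        obtain ⟨⟨hstop, hcard⟩, hfst, hsnd⟩ := hS
        obtain ⟨h1, h2, hsub, hZc, hZf, hZs⟩ := stopping_structure hd hl1 hl2 S hstop hcard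
        rw [hfst, hsnd] at hZc hZf hZs
        exact ⟨Finset.sdiff_subset, hZc, hZf, hZs⟩
      · intro Z hZ
        simp only [Finset.mem_filter, Finset.mem_univ, true_and, Prod.mk.injEq] at hZ ⊢
        obtain ⟨hZRC, hZc, hZf, hZs⟩ := hZ
        obtain ⟨hstop, hcard, hfst, hsnd⟩ :=
          reverse_construct hd hl1 hl2 R C hR hC Z hZRC hZc hZf hZs
        exact ⟨⟨hstop, hcard⟩, hfst, hsnd⟩
      · intro S hS
        simp only [Finset.mem_filter, Finset.mem_univ, true_and, Prod.mk.injEq] at hS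
        obtain ⟨⟨hstop, hcard⟩, hfst, hsnd⟩ := hS
        obtain ⟨h1, h2, hsub, _⟩ := stopping_structure hd hl1 hl2 S hstop hcard
        rw [hfst, hsnd] at hsub
        exact Finset.sdiff_sdiff_eq_self hsub
      · intro Z hZ
        simp only [Finset.mem_filter, Finset.mem_univ, true_and] at hZ
        exact Finset.sdiff_sdiff_eq_self hZ.1
    rw [Finset.sum_congr rfl hfib, Finset.sum_const, smul_eq_mul, Finset.card_product,
      Finset.card_powersetCard, Finset.card_powersetCard, Finset.card_univ, Finset.card_univ,
      Fintype.card_fin, Fintype.card_fin, Nat.descFactorial_eq_factorial_mul_choose,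
      Nat.choose_symm (by omega : l ≤ d + 1)]
    ring
  · intro S hS hcard
    obtain ⟨h1, h2, hsub, hZc, hZf, hZs⟩ := stopping_structure hd hl1 hl2 S hS hcard
    refine ⟨h1, h2, ?_⟩
    intro heq
    have hpos : 0 < (((S.image Prod.fst) ×ˢ (S.image Prod.snd)) \ S).card := by
      rw [hZc]; omega
    obtain ⟨p, hp⟩ := Finset.card_pos.1 hpos
    have h := Finset.mem_sdiff.1 hp
    rw [← heq] at h
    exact h.2 h.1
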